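/- Let N > 1, 2 < p < 6, and θ ∈ (ϑ(p,3), 1), where ϑ(p,d) := d(p−2)/(2p), and set β := 1 − (p−2)/(2pθ). Then the function f(x) := θ(6−p)(x^β − N)x − (2pθ − 3(p−2))[θ(x^β − N) + (1−θ)(x−1)N] has exactly one root in the interval (N^{1/β}, ∞). -/

import Mathlib

open Set

theorem unique_root_f (N p θ : ℝ) (hN : 1 < N) (hp1 : 2 < p) (hp2 : p < 6)
    (hθ1 : 3 * (p - 2) / (2 * p) < θ) (hθ2 : θ < 1) :
    ∃! x : ℝ, x ∈ Set.Ioi (N ^ (1 / (1 - (p - 2) / (2 * p * θ)))) ∧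
      θ * (6 - p) * (x ^ (1 - (p - 2) / (2 * p * θ)) - N) * x
        - (2 * p * θ - 3 * (p - 2)) *
          (θ * (x ^ (1 - (p - 2) / (2 * p * θ)) - N) + (1 - θ) * (x - 1) * N) = 0 := by
  have hp0 : 0 < p := by linarith
  have hθ0 : 0 < θ := lt_trans (div_pos (by linarith) (by linarith)) hθ1
  have h2pθ : 3 * (p - 2) < 2 * p * θ := by
    have := (div_lt_iff₀ (by linarith : (0:ℝ) < 2 * p)).1 hθ1
    linarith
  have h2pθ0 : 0 < 2 * p * θ := by positivity
  have hq0 : 0 < (p - 2) / (2 * p * θ) := div_pos (by linarith) h2pθ0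
  have hq1 : (p - 2) / (2 * p * θ) < 1 := (div_lt_one h2pθ0).2 (by linarith)
  obtain ⟨b, hbdef⟩ : ∃ b : ℝ, 1 - (p - 2) / (2 * p * θ) = b := ⟨_, rfl⟩
  rw [hbdef]
  have hb0 : 0 < b := by rw [← hbdef]; linarith
  have hb1 : b < 1 := by rw [← hbdef]; linarith
  obtain ⟨A, hAdef⟩ : ∃ A : ℝ, θ * (6 - p) = A := ⟨_, rfl⟩
  obtain ⟨C, hCdef⟩ : ∃ C : ℝ, 2 * p * θ - 3 * (p - 2) = C := ⟨_, rfl⟩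
  rw [hAdef, hCdef]
  have hA : 0 < A := by rw [← hAdef]; nlinarith
  have hC : 0 < C := by rw [← hCdef]; linarith
  have hN0 : 0 < N := by linarith
  obtain ⟨D, hDdef⟩ : ∃ D : ℝ, N * (A + C * (1 - θ)) = D := ⟨_, rfl⟩
  have hD : 0 < D := by
    rw [← hDdef]
    have h1 : 0 < C * (1 - θ) := mul_pos hC (by linarith)
    exact mul_pos hN0 (by linarith)
  obtain ⟨g, hg⟩ : ∃ g : ℝ → ℝ,
      ∀ x, g x = A * x ^ (b + 1) - C * θ * x ^ b - D * x + C * N := ⟨_, fun _ => rfl⟩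
  -- the expression in the statement equals g on positive reals
  have key : ∀ x : ℝ, 0 < x →
      A * (x ^ b - N) * x - C * (θ * (x ^ b - N) + (1 - θ) * (x - 1) * N) = g x := by
    intro x hx
    rw [hg, ← hDdef, Real.rpow_add_one hx.ne' b]; ring
  obtain ⟨M, hMdef⟩ : ∃ M : ℝ, N ^ (1 / b) = M := ⟨_, rfl⟩
  rw [hMdef]
  have hM1 : 1 < M := by
    rw [← hMdef]
    exact Real.one_lt_rpow_iff_of_pos hN0 |>.2 (Or.inl ⟨hN, by positivity⟩)
  have hM0 : 0 < M := by linarith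
  have hMb : M ^ b = N := by
    rw [← hMdef, ← Real.rpow_mul hN0.le, one_div_mul_cancel hb0.ne', Real.rpow_one]
  -- g M < 0
  have hgM : g M < 0 := by
    rw [← key M hM0, hMb]
    have h1 : 0 < C * ((1 - θ) * ((M - 1) * N)) :=
      mul_pos hC (mul_pos (by linarith) (mul_pos (by linarith) hN0))
    nlinarith
  -- find T > M with g T > 0
  obtain ⟨K, hKdef⟩ : ∃ K : ℝ, (D + C * θ + 1) / A = K := ⟨_, rfl⟩
  have hK0 : 0 < K := by
    rw [← hKdef]
    exact div_pos (by positivity) hA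
  obtain ⟨T, hTdef⟩ : ∃ T : ℝ, max (M + 1) (max 1 (K ^ (1 / b))) = T := ⟨_, rfl⟩
  have hT1 : (1:ℝ) ≤ T := by
    rw [← hTdef]; exact le_trans (le_max_left _ _) (le_max_right _ _)
  have hT0 : 0 < T := by linarith
  have hTM : M < T := by
    rw [← hTdef]; exact lt_of_lt_of_le (by linarith) (le_max_left _ _)
  have hTK : K ^ (1 / b) ≤ T := by
    rw [← hTdef]; exact le_trans (le_max_right _ _) (le_max_right _ _)
  have hKb : (K ^ (1 / b)) ^ b = K := by
    rw [← Real.rpow_mul hK0.le, one_div_mul_cancel hb0.ne', Real.rpow_one]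
  have hTb : K ≤ T ^ b := by
    calc K = (K ^ (1 / b)) ^ b := hKb.symm
    _ ≤ T ^ b := Real.rpow_le_rpow (by positivity) hTK hb0.le
  have hTbT : T ^ b ≤ T := by
    calc T ^ b ≤ T ^ (1:ℝ) := Real.rpow_le_rpow_of_exponent_le hT1 hb1.le
    _ = T := Real.rpow_one T
  have hAK : A * K = D + C * θ + 1 := by
    rw [← hKdef]; field_simp
  have hgT : 0 < g T := by
    rw [hg, Real.rpow_add_one hT0.ne' b]
    have h2 : A * K * T ≤ A * T ^ b * T :=
      mul_le_mul_of_nonneg_right (mul_le_mul_of_nonneg_left hTb hA.le) hT0.le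
    have h3 : C * θ * T ^ b ≤ C * θ * T :=
      mul_le_mul_of_nonneg_left hTbT (by positivity)
    have h4 : 0 < C * N := by positivity
    have h5 : A * K * T = (D + C * θ + 1) * T := by rw [hAK]
    nlinarith
  -- continuity
  have hcont : Continuous g := by
    have hgfun : g = fun x => A * x ^ (b + 1) - C * θ * x ^ b - D * x + C * N :=
      funext fun x => hg x
    rw [hgfun]
    exact (((continuous_const.mul (Real.continuous_rpow_const (by linarith))).sub
      (continuous_const.mul (Real.continuous_rpow_const hb0.le))).sub
      (continuous_const.mul continuous_id)).add continuous_const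
  -- existence via IVT
  have hIVT := intermediate_value_Ioo hTM.le hcont.continuousOn
  obtain ⟨x, hxmem, hgx⟩ := hIVT (⟨hgM, hgT⟩ : (0:ℝ) ∈ Ioo (g M) (g T))
  -- strict convexity of g
  have hconv : StrictConvexOn ℝ (Ici 0) g := by
    refine ⟨convex_Ici 0, fun u hu v hv huv a c ha hc hac => ?_⟩
    have h1 := (strictConvexOn_rpow (show (1:ℝ) < b + 1 by linarith)).2 hu hv huv ha hc hac
    have h2 := (Real.strictConcaveOn_rpow hb0 hb1).2 hu hv huv ha hc hac
    simp only [smul_eq_mul] at h1 h2 ⊢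
    rw [hg, hg, hg]
    have P1 := mul_lt_mul_of_pos_left h1 hA
    have P2 := mul_lt_mul_of_pos_left h2 (mul_pos hC hθ0)
    have h3 : (a + c) * (C * N) = C * N := by rw [hac, one_mul]
    linarith
  -- uniqueness helper
  have huniq : ∀ y z : ℝ, M < y → g y = 0 → M < z → g z = 0 → y < z → False := by
    intro y z hy hgy hz hgz hyz
    have hzM : 0 < z - M := by linarith
    have ha : 0 < (z - y) / (z - M) := div_pos (by linarith) hzM
    have hc : 0 < (y - M) / (z - M) := div_pos (by linarith) hzM
    have hac : (z - y) / (z - M) + (y - M) / (z - M) = 1 := by field_simp; ring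
    have hcomb : ((z - y) / (z - M)) • M + ((y - M) / (z - M)) • z = y := by
      simp only [smul_eq_mul]
      field_simp; ring
    have hne : M ≠ z := by intro h; rw [h] at hy; linarith
    have hlt := hconv.2 (mem_Ici.2 hM0.le) (mem_Ici.2 (by linarith : (0:ℝ) ≤ z)) hne ha hc hac
    rw [hcomb, hgy, hgz] at hlt
    simp only [smul_eq_mul, mul_zero, add_zero] at hlt
    have := mul_neg_of_pos_of_neg ha hgM
    linarith
  -- conclude
  have hxM : M < x := hxmem.1
  have hx0 : 0 < x := lt_trans hM0 hxM
  refine ⟨x, ⟨hxM, by rw [key x hx0]; exact hgx⟩, ?_⟩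
  rintro w ⟨hwM, hwE⟩
  have hw0 : 0 < w := lt_trans hM0 (mem_Ioi.1 hwM)
  have hgw : g w = 0 := by rw [← key w hw0]; exact hwE
  rcases lt_trichotomy w x with h | h | h
  · exact absurd (huniq w x (mem_Ioi.1 hwM) hgw hxM hgx h) (by simp)
  · exact h
  · exact absurd (huniq x w hxM hgx (mem_Ioi.1 hwM) hgw h) (by simp)
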